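/- arXiv:2008.00571 — 6 statements merged into one kernel-verified Lean document; each statement's English description precedes it below -/
import Mathlib

section
/- Let (α₂₁⁽ˡ⁾, α₂₂⁽ˡ⁾) be defined recursively by α₂₁⁽¹⁾ = e₁γ₁⁻, α₂₂⁽¹⁾ = γ₁⁺, and α₂₁⁽ˡ⁾ = α₂₁⁽ˡ⁻¹⁾γₗ⁺eₗ₋₁eₗ + α₂₂⁽ˡ⁻¹⁾γₗ⁻eₗ, α₂₂⁽ˡ⁾ = α₂₁⁽ˡ⁻¹⁾γₗ⁻eₗ₋₁ + α₂₂⁽ˡ⁻¹⁾γₗ⁺, where each γₗ⁺, γₗ⁻ are real with |γₗ⁺| > |γₗ⁻| and each eₗ ∈ ℂ with |eₗ| ≤ 1. Then for every ℓ ≥ 1, |α₂₂⁽ˡ⁾|² - |α₂₁⁽ˡ⁾|² ≥ ∏_{j=1}^{ℓ} (|γⱼ⁺|² - |γⱼ⁻|²) > 0. -/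
lemma key_identity (a b f : ℂ) (p m : ℝ) :
    Complex.normSq (a * (m:ℂ) * f + b * (p:ℂ)) - Complex.normSq (a * (p:ℂ) * f + b * (m:ℂ))
      = (p ^ 2 - m ^ 2) * (Complex.normSq b - Complex.normSq a * Complex.normSq f) := by
  simp only [Complex.normSq_apply, Complex.add_re, Complex.add_im, Complex.mul_re,
    Complex.mul_im, Complex.ofReal_re, Complex.ofReal_im]
  ring

theorem alpha_recursion_lower_bound
    (γp γm : ℕ → ℝ) (e : ℕ → ℂ) (α21 α22 : ℕ → ℂ)
    (hγ : ∀ ℓ, 1 ≤ ℓ → |γm ℓ| < |γp ℓ|)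
    (he : ∀ ℓ, ‖e ℓ‖ ≤ 1)
    (h21₁ : α21 1 = e 1 * (γm 1 : ℂ))
    (h22₁ : α22 1 = (γp 1 : ℂ))
    (h21 : ∀ ℓ, 2 ≤ ℓ →
      α21 ℓ = α21 (ℓ - 1) * (γp ℓ : ℂ) * e (ℓ - 1) * e ℓ + α22 (ℓ - 1) * (γm ℓ : ℂ) * e ℓ)
    (h22 : ∀ ℓ, 2 ≤ ℓ →
      α22 ℓ = α21 (ℓ - 1) * (γm ℓ : ℂ) * e (ℓ - 1) + α22 (ℓ - 1) * (γp ℓ : ℂ)) :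
    ∀ ℓ, 1 ≤ ℓ →
      (∏ j ∈ Finset.Icc 1 ℓ, (|γp j| ^ 2 - |γm j| ^ 2))
          ≤ ‖α22 ℓ‖ ^ 2 - ‖α21 ℓ‖ ^ 2 ∧
      0 < ∏ j ∈ Finset.Icc 1 ℓ, (|γp j| ^ 2 - |γm j| ^ 2) := by
  intro ℓ hℓ
  induction ℓ, hℓ using Nat.le_induction with
  | base =>
    have hγ1 := hγ 1 le_rfl
    constructor
    · rw [Finset.Icc_self, Finset.prod_singleton, h21₁, h22₁]
      have h2 : ‖e 1 * (γm 1 : ℂ)‖ ≤ |γm 1| := by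
        rw [norm_mul, Complex.norm_real, Real.norm_eq_abs]
        nlinarith [he 1, norm_nonneg (e 1), abs_nonneg (γm 1)]
      have h3 := norm_nonneg (e 1 * (γm 1 : ℂ))
      rw [Complex.norm_real, Real.norm_eq_abs]
      nlinarith [abs_nonneg (γm 1)]
    · rw [Finset.Icc_self, Finset.prod_singleton]
      nlinarith [abs_nonneg (γm 1)]
  | succ n hn ih =>
    obtain ⟨ih1, ih2⟩ := ih
    have e21 := h21 (n+1) (by omega)
    have e22 := h22 (n+1) (by omega)
    simp only [Nat.add_sub_cancel] at e21 e22
    set a := α21 n with ha'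
    set b := α22 n with hb'
    set p := γp (n+1)
    set m := γm (n+1)
    set f := e n
    set g := e (n+1)
    have hpm : m ^ 2 < p ^ 2 := by
      have := hγ (n+1) (by omega)
      nlinarith [abs_nonneg m, abs_nonneg p, sq_abs m, sq_abs p]
    have hprod : ∏ j ∈ Finset.Icc 1 (n+1), (|γp j| ^ 2 - |γm j| ^ 2)
        = (∏ j ∈ Finset.Icc 1 n, (|γp j| ^ 2 - |γm j| ^ 2)) * (|p| ^ 2 - |m| ^ 2) := by
      rw [Finset.prod_Icc_succ_top (by omega)]
    have habs : (|p| ^ 2 - |m| ^ 2 : ℝ) = p ^ 2 - m ^ 2 := by rw [sq_abs, sq_abs]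
    have hg : Complex.normSq g ≤ 1 := by
      have := he (n+1); rw [← Complex.sq_norm]; nlinarith [norm_nonneg g]
    have hf : Complex.normSq f ≤ 1 := by
      have := he n; rw [← Complex.sq_norm]; nlinarith [norm_nonneg f]
    have ha := Complex.normSq_nonneg a
    have hkey := key_identity a b f p m
    constructor
    · rw [Complex.sq_norm, Complex.sq_norm, e21, e22, hprod, habs]
      have hfac : a * (p:ℂ) * f * g + b * (m:ℂ) * g = (a * (p:ℂ) * f + b * (m:ℂ)) * g := by
        ring
      rw [hfac, Complex.normSq_mul]
      rw [Complex.sq_norm, Complex.sq_norm] at ih1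
      have hs1 : Complex.normSq (a * (p:ℂ) * f + b * (m:ℂ)) * Complex.normSq g
          ≤ Complex.normSq (a * (p:ℂ) * f + b * (m:ℂ)) := by
        nlinarith [Complex.normSq_nonneg (a * (p:ℂ) * f + b * (m:ℂ))]
      have h3 : (p ^ 2 - m ^ 2) * (∏ j ∈ Finset.Icc 1 n, (|γp j| ^ 2 - |γm j| ^ 2))
          ≤ (p ^ 2 - m ^ 2) * (Complex.normSq b - Complex.normSq a) :=
        mul_le_mul_of_nonneg_left ih1 (by linarith)
      have h4 : Complex.normSq a * Complex.normSq f ≤ Complex.normSq a := by nlinarith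
      nlinarith [hkey, hs1, h3, h4]
    · rw [hprod, habs]
      exact mul_pos ih2 (by linarith)
end

section
/- Let a, b ≥ 0 and r > 0 with a + b < r, and let p ∈ ℕ. Then the rectangular truncation tail satisfies Σ_{n=0}^{p} Σ_{ν=p+1}^{∞} (aⁿ bᵛ (n+ν)!)/(r^{n+ν+1} n! ν!) + Σ_{n=p+1}^{∞} Σ_{ν=0}^{∞} (aⁿ bᵛ (n+ν)!)/(r^{n+ν+1} n! ν!) ≤ (2/(r - a - b)) ((a+b)/r)^{p+1}. -/
open Finset Set Function

private lemma rect_F_le {x y : ℝ} (hx : 0 ≤ x) (hy : 0 ≤ y) (n ν : ℕ) :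
    x ^ n * y ^ ν * ((n + ν).choose n : ℝ) ≤ (x + y) ^ (n + ν) := by
  rw [add_pow]
  have hmem : n ∈ Finset.range (n + ν + 1) := by
    simp [Nat.lt_succ_iff]
  have := Finset.single_le_sum (f := fun k => x ^ k * y ^ (n + ν - k) * ((n + ν).choose k : ℝ))
    (fun k _ => by positivity) hmem
  simpa [Nat.add_sub_cancel_left] using this

private lemma rect_summable {x y : ℝ} (hx : 0 ≤ x) (hy : 0 ≤ y) (hs : x + y < 1) :
    Summable (fun q : ℕ × ℕ => x ^ q.1 * y ^ q.2 * ((q.1 + q.2).choose q.1 : ℝ)) := by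
  have hs0 : 0 ≤ x + y := add_nonneg hx hy
  have hgeo : Summable (fun n : ℕ => (x + y) ^ n) := summable_geometric_of_lt_one hs0 hs
  refine Summable.of_nonneg_of_le (fun q => by positivity) (fun q => ?_)
    (hgeo.mul_of_nonneg hgeo (fun n => pow_nonneg hs0 n) (fun n => pow_nonneg hs0 n))
  calc x ^ q.1 * y ^ q.2 * ((q.1 + q.2).choose q.1 : ℝ)
      ≤ (x + y) ^ (q.1 + q.2) := rect_F_le hx hy q.1 q.2
    _ = (x + y) ^ q.1 * (x + y) ^ q.2 := pow_add _ _ _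

private lemma rect_tail_val {x y : ℝ} (hx : 0 ≤ x) (hy : 0 ≤ y) (hs : x + y < 1) (p : ℕ) :
    ∑' q : ℕ × ℕ, Set.indicator {q : ℕ × ℕ | p + 1 ≤ q.1 + q.2}
        (fun q => x ^ q.1 * y ^ q.2 * ((q.1 + q.2).choose q.1 : ℝ)) q
      = (x + y) ^ (p + 1) / (1 - (x + y)) := by
  classical
  set F : ℕ × ℕ → ℝ := fun q => x ^ q.1 * y ^ q.2 * ((q.1 + q.2).choose q.1 : ℝ) with hF
  set D : Set (ℕ × ℕ) := {q : ℕ × ℕ | p + 1 ≤ q.1 + q.2} with hD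
  have hs0 : 0 ≤ x + y := add_nonneg hx hy
  have hsum : Summable F := rect_summable hx hy hs
  have hind : Summable (D.indicator F) := hsum.indicator D
  have h1 : ∑' q : ℕ × ℕ, D.indicator F q
      = ∑' σ : (Σ m : ℕ, ↥(Finset.HasAntidiagonal.antidiagonal m)),
          D.indicator F (Finset.HasAntidiagonal.sigmaAntidiagonalEquivProd σ) :=
    (Finset.HasAntidiagonal.sigmaAntidiagonalEquivProd.tsum_eq (D.indicator F)).symm
  have hsig : Summable (fun σ : (Σ m : ℕ, ↥(Finset.HasAntidiagonal.antidiagonal m)) =>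
      D.indicator F (Finset.HasAntidiagonal.sigmaAntidiagonalEquivProd σ)) :=
    Finset.HasAntidiagonal.sigmaAntidiagonalEquivProd.summable_iff.mpr hind
  have h2 : ∑' σ : (Σ m : ℕ, ↥(Finset.HasAntidiagonal.antidiagonal m)),
        D.indicator F (Finset.HasAntidiagonal.sigmaAntidiagonalEquivProd σ)
      = ∑' m : ℕ, ∑' i : ↥(Finset.HasAntidiagonal.antidiagonal m),
          D.indicator F (Finset.HasAntidiagonal.sigmaAntidiagonalEquivProd ⟨m, i⟩) := hsig.tsum_sigma
  have h3 : ∀ m : ℕ, ∑' i : ↥(Finset.HasAntidiagonal.antidiagonal m),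
        D.indicator F (Finset.HasAntidiagonal.sigmaAntidiagonalEquivProd ⟨m, i⟩)
      = if p + 1 ≤ m then (x + y) ^ m else 0 := by
    intro m
    have : ∑' i : ↥(Finset.HasAntidiagonal.antidiagonal m),
        D.indicator F (Finset.HasAntidiagonal.sigmaAntidiagonalEquivProd ⟨m, i⟩)
        = ∑ i ∈ Finset.HasAntidiagonal.antidiagonal m, D.indicator F i := by
      rw [← Finset.tsum_subtype]
      exact tsum_congr fun i => rfl
    rw [this]
    by_cases hm : p + 1 ≤ m
    · have heach : ∀ i ∈ Finset.HasAntidiagonal.antidiagonal m, D.indicator F i = F i := by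
        intro i hi
        rw [Finset.HasAntidiagonal.mem_antidiagonal] at hi
        exact Set.indicator_of_mem (by simp [hD, hi]; omega) F
      rw [Finset.sum_congr rfl heach, if_pos hm]
      rw [Finset.Nat.sum_antidiagonal_eq_sum_range_succ_mk, add_pow]
      refine Finset.sum_congr rfl fun k hk => ?_
      rw [Finset.mem_range, Nat.lt_succ_iff] at hk
      simp [hF, Nat.add_sub_cancel' hk]
    · have heach : ∀ i ∈ Finset.HasAntidiagonal.antidiagonal m, D.indicator F i = 0 := by
        intro i hi
        rw [Finset.HasAntidiagonal.mem_antidiagonal] at hi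
        exact Set.indicator_of_notMem (by simp [hD, hi]; omega) F
      rw [Finset.sum_congr rfl heach, if_neg hm]
      simp
    
  rw [h1, h2]
  rw [tsum_congr h3]
  have h4 : ∑' m : ℕ, (if p + 1 ≤ m then (x + y) ^ m else 0)
      = ∑' m : ℕ, (x + y) ^ (m + (p + 1)) := by
    rw [← Function.Injective.tsum_eq (g := fun m : ℕ => m + (p + 1))
      (f := fun m => if p + 1 ≤ m then (x + y) ^ m else 0) (add_left_injective _) ?_]
    · exact tsum_congr fun m => by simp
    · intro m hm
      have hm' : p + 1 ≤ m := by by_contra h; simp [h] at hm; omega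
      exact ⟨m - (p + 1), by simpa using Nat.sub_add_cancel hm'⟩
  rw [h4]
  have h5 : ∀ m : ℕ, (x + y) ^ (m + (p + 1)) = (x + y) ^ m * (x + y) ^ (p + 1) := fun m =>
    pow_add _ _ _
  rw [tsum_congr h5, tsum_mul_right, tsum_geometric_of_lt_one hs0 hs, inv_mul_eq_div]

theorem double_series_rectangular_tail (a b r : ℝ) (ha : 0 ≤ a) (hb : 0 ≤ b) (hr : 0 < r)
    (hab : a + b < r) (p : ℕ) :
    (∑ n ∈ Finset.range (p + 1), ∑' ν : ℕ,
        a ^ n * b ^ (ν + p + 1) * (Nat.factorial (n + (ν + p + 1))) /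
          (r ^ (n + (ν + p + 1) + 1) * (Nat.factorial n) * (Nat.factorial (ν + p + 1))))
      + (∑' n : ℕ, ∑' ν : ℕ,
        a ^ (n + p + 1) * b ^ ν * (Nat.factorial ((n + p + 1) + ν)) /
          (r ^ ((n + p + 1) + ν + 1) * (Nat.factorial (n + p + 1)) * (Nat.factorial ν)))
      ≤ (2 / (r - a - b)) * ((a + b) / r) ^ (p + 1) := by
  classical
  have hr0 : r ≠ 0 := ne_of_gt hr
  set x := a / r with hxdef
  set y := b / r with hydef
  have hx0 : 0 ≤ x := div_nonneg ha hr.le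
  have hy0 : 0 ≤ y := div_nonneg hb hr.le
  have hs0 : 0 ≤ x + y := add_nonneg hx0 hy0
  have hs1 : x + y < 1 := by
    rw [hxdef, hydef, ← add_div, div_lt_one hr]; exact hab
  set F : ℕ × ℕ → ℝ := fun q => x ^ q.1 * y ^ q.2 * ((q.1 + q.2).choose q.1 : ℝ) with hFdef
  set D : Set (ℕ × ℕ) := {q : ℕ × ℕ | p + 1 ≤ q.1 + q.2} with hDdef
  have hF0 : ∀ q, 0 ≤ F q := fun q => by
    have : (0:ℝ) ≤ ((q.1 + q.2).choose q.1 : ℝ) := Nat.cast_nonneg _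
    positivity
  have hsum : Summable F := rect_summable hx0 hy0 hs1
  have hind : Summable (D.indicator F) := hsum.indicator D
  -- rewrite individual terms
  have hterm : ∀ n ν : ℕ,
      a ^ n * b ^ ν * ((Nat.factorial (n + ν) : ℝ)) /
        (r ^ (n + ν + 1) * (Nat.factorial n) * (Nat.factorial ν)) = F (n, ν) / r := by
    intro n ν
    have hnat : (n + ν).choose n * n.factorial * ν.factorial = (n + ν).factorial := by
      rw [add_comm n ν, ← Nat.add_choose_mul_factorial_mul_factorial ν n]; ring
    have hfact : ((n + ν).factorial : ℝ)
        = ((n + ν).choose n : ℝ) * (Nat.factorial n) * (Nat.factorial ν) := by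
      exact_mod_cast hnat.symm
    have hn : (n.factorial : ℝ) ≠ 0 := Nat.cast_ne_zero.mpr n.factorial_ne_zero
    have hν : (ν.factorial : ℝ) ≠ 0 := Nat.cast_ne_zero.mpr ν.factorial_ne_zero
    simp only [hFdef]
    rw [hfact, hxdef, hydef, div_pow, div_pow]
    field_simp
    ring
  -- inner summability facts
  have hinj2 : Function.Injective (fun q : ℕ × ℕ => (q.1 + p + 1, q.2)) := by
    intro q q' h
    simp only [Prod.mk.injEq] at h
    exact Prod.ext (by omega) h.2
  have hF2 : Summable (fun q : ℕ × ℕ => F (q.1 + p + 1, q.2)) := hsum.comp_injective hinj2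
  have hSn : ∀ n : ℕ, Summable (fun ν : ℕ => F (n, ν + p + 1)) := fun n =>
    (hsum.prod_factor n).comp_injective (fun ν ν' h => by omega)
  -- rewrite the goal
  have e1 : ∀ n : ℕ,
      (∑' ν : ℕ, a ^ n * b ^ (ν + p + 1) * (Nat.factorial (n + (ν + p + 1)) : ℝ) /
          (r ^ (n + (ν + p + 1) + 1) * (Nat.factorial n) * (Nat.factorial (ν + p + 1))))
        = (∑' ν : ℕ, F (n, ν + p + 1)) / r := fun n => by
    rw [← tsum_div_const]
    exact tsum_congr fun ν => hterm n (ν + p + 1)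
  have e2 : (∑' n : ℕ, ∑' ν : ℕ,
        a ^ (n + p + 1) * b ^ ν * (Nat.factorial ((n + p + 1) + ν) : ℝ) /
          (r ^ ((n + p + 1) + ν + 1) * (Nat.factorial (n + p + 1)) * (Nat.factorial ν)))
      = (∑' q : ℕ × ℕ, F (q.1 + p + 1, q.2)) / r := by
    have step1 : ∀ n : ℕ, (∑' ν : ℕ,
        a ^ (n + p + 1) * b ^ ν * (Nat.factorial ((n + p + 1) + ν) : ℝ) /
          (r ^ ((n + p + 1) + ν + 1) * (Nat.factorial (n + p + 1)) * (Nat.factorial ν)))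
        = (∑' ν : ℕ, F (n + p + 1, ν)) / r := fun n => by
      rw [← tsum_div_const]
      exact tsum_congr fun ν => hterm (n + p + 1) ν
    rw [tsum_congr step1, tsum_div_const]
    congr 1
    exact (hF2.tsum_prod' hF2.prod_factor).symm
  simp only [e1]
  rw [e2, ← Finset.sum_div, ← add_div]
  -- the master tail sum
  set T : ℝ := ∑' q : ℕ × ℕ, D.indicator F q with hTdef
  have hTval : T = (x + y) ^ (p + 1) / (1 - (x + y)) := rect_tail_val hx0 hy0 hs1 p
  -- second sum is at most T
  have hS2 : (∑' q : ℕ × ℕ, F (q.1 + p + 1, q.2)) ≤ T := by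
    refine Summable.tsum_le_tsum_of_inj (fun q : ℕ × ℕ => (q.1 + p + 1, q.2)) hinj2
      (fun c _ => Set.indicator_nonneg (fun q _ => hF0 q) c) (fun q => ?_) hF2 hind
    have hmem : ((q.1 + p + 1, q.2) : ℕ × ℕ) ∈ D := by simp [hDdef]; omega
    rw [Set.indicator_of_mem hmem]
  -- first sum is at most T
  have hS1 : (∑ n ∈ Finset.range (p + 1), ∑' ν : ℕ, F (n, ν + p + 1)) ≤ T := by
    set S : ℕ → Set (ℕ × ℕ) := fun n => {q : ℕ × ℕ | q.1 = n ∧ p + 1 ≤ q.2} with hSdef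
    have hSeq : ∀ n : ℕ, (∑' ν : ℕ, F (n, ν + p + 1)) = ∑' q : ℕ × ℕ, (S n).indicator F q := by
      intro n
      have hinj1 : Function.Injective (fun ν : ℕ => ((n, ν + p + 1) : ℕ × ℕ)) := by
        intro ν ν' h
        simp only [Prod.mk.injEq] at h
        omega
      rw [← Function.Injective.tsum_eq (g := fun ν : ℕ => ((n, ν + p + 1) : ℕ × ℕ))
        (f := (S n).indicator F) hinj1 ?_]
      · exact tsum_congr fun ν =>
          (Set.indicator_of_mem (by simp [hSdef]) F).symm
      · intro q hq
        have hqS : q ∈ S n := by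
          by_contra h
          exact hq (Set.indicator_of_notMem h F)
        obtain ⟨h1, h2⟩ := hqS
        exact ⟨q.2 - (p + 1), Prod.ext h1.symm (by simp; omega)⟩
    rw [Finset.sum_congr rfl fun n _ => hSeq n]
    rw [← Summable.tsum_finsetSum (fun n _ => hsum.indicator (S n))]
    refine Summable.tsum_le_tsum (fun q => ?_)
      (summable_sum fun n _ => hsum.indicator (S n)) hind
    have hindnonneg : 0 ≤ D.indicator F q := Set.indicator_nonneg (fun q _ => hF0 q) q
    by_cases h2 : p + 1 ≤ q.2
    · have : ∀ n ∈ Finset.range (p + 1), (S n).indicator F q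
          = if q.1 = n then F q else 0 := by
        intro n _
        by_cases h1 : q.1 = n
        · rw [if_pos h1, Set.indicator_of_mem (by exact ⟨h1, h2⟩) F]
        · rw [if_neg h1, Set.indicator_of_notMem (by simp [hSdef, h1]) F]
      rw [Finset.sum_congr rfl this, Finset.sum_ite_eq (Finset.range (p + 1)) q.1 fun _ => F q]
      by_cases h1 : q.1 ∈ Finset.range (p + 1)
      · rw [if_pos h1]
        have hmem : q ∈ D := by simp [hDdef]; omega
        rw [Set.indicator_of_mem hmem]
      · rw [if_neg h1]; exact hindnonneg
    · have : ∀ n ∈ Finset.range (p + 1), (S n).indicator F q = 0 := fun n _ =>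
        Set.indicator_of_notMem (by simp [hSdef]; omega) F
      rw [Finset.sum_congr rfl this]
      simpa using hindnonneg
  -- combine
  have hrab : (0:ℝ) < r - a - b := by linarith
  have hfinal : ((∑ n ∈ Finset.range (p + 1), ∑' ν : ℕ, F (n, ν + p + 1))
      + ∑' q : ℕ × ℕ, F (q.1 + p + 1, q.2)) ≤ 2 * ((x + y) ^ (p + 1) / (1 - (x + y))) := by
    rw [← hTval]; linarith
  calc ((∑ n ∈ Finset.range (p + 1), ∑' ν : ℕ, F (n, ν + p + 1))
        + ∑' q : ℕ × ℕ, F (q.1 + p + 1, q.2)) / r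
      ≤ 2 * ((x + y) ^ (p + 1) / (1 - (x + y))) / r := by gcongr
    _ = (2 / (r - a - b)) * ((a + b) / r) ^ (p + 1) := by
        rw [hxdef, hydef, ← add_div]
        have h1 : (1:ℝ) - (a + b) / r = (r - a - b) / r := by field_simp; ring
        rw [h1]
        field_simp
end

section
/- With the Cagniard–de Hoop contour ξ±(t) = (η/r)(iρt ± z√(t²-1)), Λ±(t) = (η/r)(ρ√(t²-1) ∓ izt) for ρ ≥ 0, z > 0, r = √(ρ²+z²), η > 0, t > 1, one has |ξ±(t) + iη|² = |Λ±(t)|² (rt + ρ)/(rt - ρ) and |ξ±(t) - iη|² = |Λ±(t)|² (rt - ρ)/(rt + ρ). -/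
set_option maxHeartbeats 1000000

open Complex in
theorem cagniard_de_hoop_modulus_identities (ρ z η r t : ℝ)
    (hρ : 0 ≤ ρ) (hz : 0 < z) (hr : r = Real.sqrt (ρ ^ 2 + z ^ 2)) (hη : 0 < η) (ht : 1 < t) :
    (‖(((η / r : ℝ) : ℂ) * (I * ρ * t + z * Real.sqrt (t ^ 2 - 1))) + I * η‖ ^ 2
        = ‖(((η / r : ℝ) : ℂ) * (ρ * Real.sqrt (t ^ 2 - 1) - I * z * t))‖ ^ 2
            * ((r * t + ρ) / (r * t - ρ))) ∧
    (‖(((η / r : ℝ) : ℂ) * (I * ρ * t + z * Real.sqrt (t ^ 2 - 1))) - I * η‖ ^ 2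
        = ‖(((η / r : ℝ) : ℂ) * (ρ * Real.sqrt (t ^ 2 - 1) - I * z * t))‖ ^ 2
            * ((r * t - ρ) / (r * t + ρ))) ∧
    (‖(((η / r : ℝ) : ℂ) * (I * ρ * t - z * Real.sqrt (t ^ 2 - 1))) + I * η‖ ^ 2
        = ‖(((η / r : ℝ) : ℂ) * (ρ * Real.sqrt (t ^ 2 - 1) + I * z * t))‖ ^ 2
            * ((r * t + ρ) / (r * t - ρ))) ∧
    (‖(((η / r : ℝ) : ℂ) * (I * ρ * t - z * Real.sqrt (t ^ 2 - 1))) - I * η‖ ^ 2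
        = ‖(((η / r : ℝ) : ℂ) * (ρ * Real.sqrt (t ^ 2 - 1) + I * z * t))‖ ^ 2
            * ((r * t - ρ) / (r * t + ρ))) := by
  have h2 : (0:ℝ) < ρ ^ 2 + z ^ 2 := by positivity
  have hr0 : 0 < r := hr ▸ Real.sqrt_pos.mpr h2
  have hr2 : r ^ 2 = ρ ^ 2 + z ^ 2 := by rw [hr]; exact Real.sq_sqrt h2.le
  have hrρ : ρ < r := by nlinarith [sq_nonneg (r - ρ), sq_nonneg (r + ρ)]
  set s := Real.sqrt (t ^ 2 - 1) with hsdef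
  have hs2 : s ^ 2 = t ^ 2 - 1 := Real.sq_sqrt (by nlinarith)
  have h1 : 0 < r * t - ρ := by nlinarith
  have h3 : 0 < r * t + ρ := by nlinarith
  refine ⟨?_, ?_, ?_, ?_⟩ <;>
  · simp only [Complex.sq_norm, Complex.normSq_apply, Complex.add_re, Complex.add_im,
      Complex.sub_re, Complex.sub_im, Complex.mul_re, Complex.mul_im, Complex.I_re,
      Complex.I_im, Complex.ofReal_re, Complex.ofReal_im]
    have hz2 : z ^ 2 = r ^ 2 - ρ ^ 2 := by linarith
    field_simp
    ring_nf
    rw [hs2, hz2]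
    ring
end

section
/- Let r > ρ ≥ 0, α, ψ ∈ ℝ, and t > 1. Then |rt cos(ψ) sin α + i(ρ sin(ψ) sin α + √(r²t² - ρ²) cos α)|² ≤ r²t², i.e., (ρ sin α + √(r²t²-ρ²) sin ψ cos α)² + (r²t² - ρ²) cos²ψ ≤ r²t². -/
open Complex in
theorem kernel_modulus_bound (r ρ α ψ t : ℝ) (hρ : 0 ≤ ρ) (hr : ρ < r) (ht : 1 < t) :
    ‖((r * t * Real.cos ψ * Real.sin α : ℝ)
          + Complex.I * ((ρ * Real.sin ψ * Real.sin α
              + Real.sqrt (r ^ 2 * t ^ 2 - ρ ^ 2) * Real.cos α : ℝ)))‖ ^ 2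
        ≤ r ^ 2 * t ^ 2 ∧
    (ρ * Real.sin α + Real.sqrt (r ^ 2 * t ^ 2 - ρ ^ 2) * Real.sin ψ * Real.cos α) ^ 2
        + (r ^ 2 * t ^ 2 - ρ ^ 2) * Real.cos ψ ^ 2 ≤ r ^ 2 * t ^ 2 := by
  have h1 : ρ ^ 2 < r ^ 2 := by nlinarith
  have h2 : (1 : ℝ) ≤ t ^ 2 := by nlinarith
  have hrt : ρ ^ 2 ≤ r ^ 2 * t ^ 2 := by nlinarith [sq_nonneg r]
  set s := Real.sqrt (r ^ 2 * t ^ 2 - ρ ^ 2) with hs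
  have hs2 : s ^ 2 = r ^ 2 * t ^ 2 - ρ ^ 2 := Real.sq_sqrt (by linarith)
  have hψ := Real.sin_sq_add_cos_sq ψ
  have hα := Real.sin_sq_add_cos_sq α
  have key1 : (r * t * Real.cos ψ * Real.sin α) ^ 2
      + (ρ * Real.sin ψ * Real.sin α + s * Real.cos α) ^ 2
      + (ρ * Real.cos α - s * Real.sin ψ * Real.sin α) ^ 2 = r ^ 2 * t ^ 2 := by
    linear_combination (Real.sin ψ ^ 2 * Real.sin α ^ 2 + Real.cos α ^ 2) * hs2
      + (r ^ 2 * t ^ 2 * Real.sin α ^ 2) * hψ + (r ^ 2 * t ^ 2) * hα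
  have key2 : (ρ * Real.sin α + s * Real.sin ψ * Real.cos α) ^ 2
      + (r ^ 2 * t ^ 2 - ρ ^ 2) * Real.cos ψ ^ 2
      + (ρ * Real.cos α - s * Real.sin ψ * Real.sin α) ^ 2 = r ^ 2 * t ^ 2 := by
    linear_combination (Real.sin ψ ^ 2) * hs2
      + (ρ ^ 2 + s ^ 2 * Real.sin ψ ^ 2) * hα + (r ^ 2 * t ^ 2 - ρ ^ 2) * hψ
  constructor
  · rw [Complex.sq_norm]
    simp only [Complex.normSq_apply, Complex.add_re, Complex.add_im, Complex.ofReal_re,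
      Complex.ofReal_im, Complex.mul_re, Complex.mul_im, Complex.I_re, Complex.I_im]
    nlinarith [sq_nonneg (ρ * Real.cos α - s * Real.sin ψ * Real.sin α), key1]
  · nlinarith [sq_nonneg (ρ * Real.cos α - s * Real.sin ψ * Real.sin α), key2]
end

section
/- Let r > ρ ≥ 0, z > 0 with r² = ρ² + z², η > 0, and define ξ±(t), Λ±(t) as the Cagniard–de Hoop contour. For any point r̃ = (r̃ sin α cos β, r̃ sin α sin β, r̃ cos α) ∈ ℝ³ with r̃ = |r̃|, any φ ∈ ℝ, and any integer q ≥ 0, the function ĝ_q(ξ,η,φ;r̃) = (i^q r̃^q/q!)(ξ²+η²)^{q/2}[((ξ cos(φ-β)+η sin(φ-β))/√(ξ²+η²)) sin α + i cos α]^q satisfies |ĝ_q(ξ±(t), η, φ; r̃)| ≤ (r̃^q |Λ±(t)|^q / q!) (r²t²/(r²t² - ρ²))^{q/2} for all t > 1. -/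
/-- The sign convention: `1` for `x ≥ 0`, `-1` for `x < 0`. -/
noncomputable def signConv (x : ℝ) : ℝ := if x < 0 then -1 else 1

/-- The branch of the complex square root defined by
`√z = √((|z|+Re z)/2) + i·sign(Im z)·√((|z|-Re z)/2)`. -/
noncomputable def branchSqrt (z : ℂ) : ℂ :=
  (Real.sqrt ((‖z‖ + z.re) / 2) : ℂ)
    + Complex.I * (signConv z.im : ℂ) * (Real.sqrt ((‖z‖ - z.re) / 2) : ℂ)

/-- The kernel `ĝ_q(ξ, η, φ; r̃)` for a point with spherical coordinates `(r̃, α, β)`,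
where `(ξ² + η²)^{q/2}` is interpreted via the branch `branchSqrt`. -/
noncomputable def ghat (q : ℕ) (ξ : ℂ) (η φ α β rt : ℝ) : ℂ :=
  (Complex.I ^ q * (rt : ℂ) ^ q / (Nat.factorial q : ℂ))
    * (branchSqrt (ξ ^ 2 + (η : ℂ) ^ 2)) ^ q
    * (((ξ * (Real.cos (φ - β) : ℝ) + (η : ℂ) * (Real.sin (φ - β) : ℝ))
          / branchSqrt (ξ ^ 2 + (η : ℂ) ^ 2)) * (Real.sin α : ℝ)
        + Complex.I * (Real.cos α : ℝ)) ^ q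

lemma branchSqrt_sq (c : ℂ) (hc : 0 < c.re) : branchSqrt (c ^ 2) = c := by
  unfold branchSqrt signConv
  have habs : ‖c ^ 2‖ = c.re ^ 2 + c.im ^ 2 := by
    rw [norm_pow, Complex.sq_norm, Complex.normSq_apply]; ring
  have hre : (c ^ 2).re = c.re ^ 2 - c.im ^ 2 := by
    simp [pow_two, Complex.mul_re]
  have him : (c ^ 2).im = 2 * c.re * c.im := by
    simp [pow_two, Complex.mul_im]; ring
  rw [habs, hre, him]
  have h1 : (c.re ^ 2 + c.im ^ 2 + (c.re ^ 2 - c.im ^ 2)) / 2 = c.re ^ 2 := by ring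
  have h2 : (c.re ^ 2 + c.im ^ 2 - (c.re ^ 2 - c.im ^ 2)) / 2 = c.im ^ 2 := by ring
  rw [h1, h2, Real.sqrt_sq hc.le, Real.sqrt_sq_eq_abs]
  by_cases hb : c.im < 0
  · rw [if_pos (by nlinarith), abs_of_neg hb]
    apply Complex.ext <;> simp
  · push_neg at hb
    rw [if_neg (by nlinarith), abs_of_nonneg hb]
    apply Complex.ext <;> simp

set_option maxHeartbeats 800000 in
lemma ghat_aux (ρ z η rt α β φ : ℝ) (q : ℕ) (t ε : ℝ)
    (hρ : 0 ≤ ρ) (hz : 0 < z) (hη : 0 < η) (hrt : 0 ≤ rt) (ht : 1 < t)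
    (hε : ε = 1 ∨ ε = -1) :
    ‖(ghat q
          (((η / Real.sqrt (ρ ^ 2 + z ^ 2) : ℝ) : ℂ)
            * (Complex.I * ρ * t + ε * (z * Real.sqrt (t ^ 2 - 1)))) η φ α β rt)‖
        ≤ rt ^ q
            * ‖(((η / Real.sqrt (ρ ^ 2 + z ^ 2) : ℝ) : ℂ)
                * (ρ * Real.sqrt (t ^ 2 - 1) - ε * (Complex.I * z * t)))‖ ^ q
            / (Nat.factorial q)
            * Real.sqrt ((ρ ^ 2 + z ^ 2) * t ^ 2 / ((ρ ^ 2 + z ^ 2) * t ^ 2 - ρ ^ 2)) ^ q := by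
  have ht0 : (0:ℝ) < t := lt_trans one_pos ht
  have hε2 : ε ^ 2 = 1 := by rcases hε with h | h <;> rw [h] <;> norm_num
  have ht1 : (0:ℝ) < t ^ 2 - 1 := by nlinarith
  have hΜpos : (0:ℝ) < (ρ ^ 2 + z ^ 2) * t ^ 2 - ρ ^ 2 := by
    nlinarith [mul_nonneg (sq_nonneg ρ) ht1.le, mul_pos (mul_pos hz hz) (mul_pos ht0 ht0)]
  have hD : Real.sqrt ((ρ ^ 2 + z ^ 2) * t ^ 2 / ((ρ ^ 2 + z ^ 2) * t ^ 2 - ρ ^ 2))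
      = Real.sqrt (ρ ^ 2 + z ^ 2) * t / Real.sqrt ((ρ ^ 2 + z ^ 2) * t ^ 2 - ρ ^ 2) := by
    rw [Real.sqrt_div (by positivity), Real.sqrt_mul (by positivity), Real.sqrt_sq ht0.le]
  rw [hD]
  unfold ghat
  -- make r, s, k opaque
  have hr2' : Real.sqrt (ρ ^ 2 + z ^ 2) ^ 2 = ρ ^ 2 + z ^ 2 := Real.sq_sqrt (by positivity)
  have hr' : 0 < Real.sqrt (ρ ^ 2 + z ^ 2) := Real.sqrt_pos.mpr (by positivity)
  have hs2' : Real.sqrt (t ^ 2 - 1) ^ 2 = t ^ 2 - 1 := Real.sq_sqrt (by nlinarith)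
  have hs' : 0 < Real.sqrt (t ^ 2 - 1) := Real.sqrt_pos.mpr (by nlinarith)
  generalize hr_def : Real.sqrt (ρ ^ 2 + z ^ 2) = r at *
  generalize hs_def : Real.sqrt (t ^ 2 - 1) = s at *
  rename' hr2' => hr2, hr' => hr, hs2' => hs2, hs' => hs
  have hk' : (η / r) * r = η := div_mul_cancel₀ η hr.ne'
  have hk0' : 0 < η / r := div_pos hη hr
  generalize hk_def : η / r = k at *
  rename' hk' => hk, hk0' => hk0
  -- complex facts
  have hkc : (k:ℂ) * (r:ℂ) = (η:ℂ) := by exact_mod_cast hk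
  have hr2c : (r:ℂ) ^ 2 = (ρ:ℂ) ^ 2 + (z:ℂ) ^ 2 := by exact_mod_cast hr2
  have hs2c : (s:ℂ) ^ 2 = (t:ℂ) ^ 2 - 1 := by exact_mod_cast hs2
  have hε2c : (ε:ℂ) ^ 2 = 1 := by exact_mod_cast hε2
  set ξ : ℂ := ((k:ℝ):ℂ) * (Complex.I * ρ * t + ε * (z * s)) with hξ_def
  set A : ℂ := ((k * (z * t) : ℝ) : ℂ) + ((k * (ε * ρ * s) : ℝ) : ℂ) * Complex.I with hA_def
  clear_value ξ A
  have hAre : A.re = k * (z * t) := by simp [hA_def]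
  have hAre0 : 0 < A.re := by rw [hAre]; positivity
  have hA0 : A ≠ 0 := fun h => by rw [h] at hAre0; simp at hAre0
  have hξA : ξ ^ 2 + (η:ℂ) ^ 2 = A ^ 2 := by
    rw [hξ_def, hA_def]
    push_cast
    linear_combination ((k:ℂ))^2 * ((ρ:ℂ)^2*(t:ℂ)^2 - (ε:ℂ)^2*(ρ:ℂ)^2*(s:ℂ)^2) * Complex.I_sq
      + (k:ℂ)^2 * ((z:ℂ)^2*(s:ℂ)^2 + (ρ:ℂ)^2*(s:ℂ)^2) * hε2c
      + (k:ℂ)^2 * ((z:ℂ)^2+(ρ:ℂ)^2) * hs2c + (k:ℂ)^2 * hr2c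
      - (((k:ℂ)*(r:ℂ)) + (η:ℂ)) * hkc
  have hA : branchSqrt (ξ ^ 2 + (η:ℂ) ^ 2) = A := by
    rw [hξA]; exact branchSqrt_sq A hAre0
  rw [hA]
  set c : ℝ := Real.cos (φ - β) with hc_def
  set s' : ℝ := Real.sin (φ - β) with hs'_def
  set sa : ℝ := Real.sin α with hsa_def
  set ca : ℝ := Real.cos α with hca_def
  clear_value c s' sa ca
  have hc2 : s' ^ 2 + c ^ 2 = 1 := by rw [hc_def, hs'_def]; exact Real.sin_sq_add_cos_sq _
  have ha2 : sa ^ 2 + ca ^ 2 = 1 := by rw [hsa_def, hca_def]; exact Real.sin_sq_add_cos_sq _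
  set X : ℂ := ξ * (c:ℂ) + (η:ℂ) * (s':ℂ) with hX_def
  set E : ℂ := X * (sa:ℂ) + Complex.I * A * (ca:ℂ) with hE_def
  clear_value X E
  have hAB : A ^ q * ((X / A) * (sa:ℂ) + Complex.I * (ca:ℂ)) ^ q = E ^ q := by
    rw [← mul_pow]
    congr 1
    field_simp [hE_def]
    rw [hE_def]; ring
  rw [mul_assoc, hAB]
  -- |E| ≤ η t
  set u : ℝ := z * c * sa - ρ * ca with hu_def
  set v : ℝ := ρ * c * sa + z * ca with hv_def
  set w : ℝ := r * s' * sa with hw_def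
  clear_value u v w
  have huvw : u ^ 2 + v ^ 2 + w ^ 2 = r ^ 2 := by
    rw [hu_def, hv_def, hw_def]
    linear_combination (-(c^2*sa^2) - ca^2) * hr2 + r^2*sa^2 * hc2 + r^2 * ha2
  have hEre : E.re = k * (ε * s * u + w) := by
    rw [hE_def, hX_def, hξ_def, hA_def, hu_def, hw_def]
    simp [Complex.add_re, Complex.add_im, Complex.mul_re, Complex.mul_im]
    linear_combination (-s' * sa) * hk
  have hEim : E.im = k * (t * v) := by
    rw [hE_def, hX_def, hξ_def, hA_def, hv_def]
    simp [Complex.add_re, Complex.add_im, Complex.mul_re, Complex.mul_im]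
    ring
  have hid : t ^ 2 * r ^ 2 - ((ε * s * u + w) ^ 2 + (t * v) ^ 2) = (u - ε * s * w) ^ 2 := by
    linear_combination -t^2 * huvw - s^2*(u^2+w^2) * hε2 - (u^2+w^2) * hs2
  have hkey : (ε * s * u + w) ^ 2 + (t * v) ^ 2 ≤ t ^ 2 * r ^ 2 := by
    linarith [sq_nonneg (u - ε * s * w), hid]

  have hE : ‖E‖ ≤ η * t := by
    rw [Complex.norm_def, Complex.normSq_apply, hEre, hEim]
    have h1 : k * (ε * s * u + w) * (k * (ε * s * u + w)) + k * (t * v) * (k * (t * v))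
        = k ^ 2 * ((ε * s * u + w) ^ 2 + (t * v) ^ 2) := by ring
    have h2 : k ^ 2 * ((ε * s * u + w) ^ 2 + (t * v) ^ 2) ≤ (η * t) ^ 2 := by
      have h3 : (η * t) ^ 2 = k ^ 2 * (t ^ 2 * r ^ 2) := by rw [← hk]; ring
      rw [h3]
      exact mul_le_mul_of_nonneg_left hkey (sq_nonneg k)
    rw [h1]
    calc Real.sqrt (k ^ 2 * ((ε * s * u + w) ^ 2 + (t * v) ^ 2))
        ≤ Real.sqrt ((η * t) ^ 2) := Real.sqrt_le_sqrt h2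
      _ = η * t := Real.sqrt_sq (by positivity)
  -- |Λ| computation
  have hns : Complex.normSq ((ρ:ℂ) * (s:ℂ) - (ε:ℂ) * (Complex.I * z * t))
      = (ρ ^ 2 + z ^ 2) * t ^ 2 - ρ ^ 2 := by
    rw [Complex.normSq_apply]
    simp [Complex.sub_re, Complex.sub_im, Complex.mul_re, Complex.mul_im]
    linear_combination z^2*t^2*hε2 + ρ^2*hs2
  have hΛ : ‖(((k:ℝ):ℂ) * ((ρ:ℂ) * (s:ℂ) - (ε:ℂ) * (Complex.I * z * t)))‖
      = k * Real.sqrt ((ρ ^ 2 + z ^ 2) * t ^ 2 - ρ ^ 2) := by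
    rw [norm_mul, Complex.norm_of_nonneg hk0.le, Complex.norm_def, hns]
  rw [hΛ]
  have habs : ‖(Complex.I ^ q * (rt:ℂ) ^ q / (Nat.factorial q : ℂ) * E ^ q)‖
      = rt ^ q * ‖E‖ ^ q / (Nat.factorial q : ℝ) := by
    rw [norm_mul, norm_div, norm_mul, norm_pow, norm_pow, norm_pow, Complex.norm_I, one_pow,
      Complex.norm_of_nonneg hrt, Complex.norm_natCast]
    ring
  rw [habs]
  have hS : 0 < Real.sqrt ((ρ ^ 2 + z ^ 2) * t ^ 2 - ρ ^ 2) := Real.sqrt_pos.mpr hΜpos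
  have hprod : (k * Real.sqrt ((ρ ^ 2 + z ^ 2) * t ^ 2 - ρ ^ 2))
      * (r * t / Real.sqrt ((ρ ^ 2 + z ^ 2) * t ^ 2 - ρ ^ 2)) = η * t := by
    field_simp
    linear_combination hk
  have hRHS : rt ^ q * (k * Real.sqrt ((ρ ^ 2 + z ^ 2) * t ^ 2 - ρ ^ 2)) ^ q
        / (Nat.factorial q : ℝ)
        * (r * t / Real.sqrt ((ρ ^ 2 + z ^ 2) * t ^ 2 - ρ ^ 2)) ^ q
      = rt ^ q * (η * t) ^ q / (Nat.factorial q : ℝ) := by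
    rw [← hprod, mul_pow]
    ring
  rw [hRHS]
  gcongr


theorem ghat_bound_on_contour (ρ z η rt α β φ : ℝ) (q : ℕ) (t : ℝ)
    (hρ : 0 ≤ ρ) (hz : 0 < z) (hη : 0 < η) (hrt : 0 ≤ rt) (ht : 1 < t) :
    (‖(ghat q
          (((η / Real.sqrt (ρ ^ 2 + z ^ 2) : ℝ) : ℂ)
            * (Complex.I * ρ * t + z * Real.sqrt (t ^ 2 - 1))) η φ α β rt)‖
        ≤ rt ^ q
            * ‖(((η / Real.sqrt (ρ ^ 2 + z ^ 2) : ℝ) : ℂ)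
                * (ρ * Real.sqrt (t ^ 2 - 1) - Complex.I * z * t))‖ ^ q
            / (Nat.factorial q)
            * Real.sqrt ((ρ ^ 2 + z ^ 2) * t ^ 2 / ((ρ ^ 2 + z ^ 2) * t ^ 2 - ρ ^ 2)) ^ q) ∧
    (‖(ghat q
          (((η / Real.sqrt (ρ ^ 2 + z ^ 2) : ℝ) : ℂ)
            * (Complex.I * ρ * t - z * Real.sqrt (t ^ 2 - 1))) η φ α β rt)‖
        ≤ rt ^ q
            * ‖(((η / Real.sqrt (ρ ^ 2 + z ^ 2) : ℝ) : ℂ)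
                * (ρ * Real.sqrt (t ^ 2 - 1) + Complex.I * z * t))‖ ^ q
            / (Nat.factorial q)
            * Real.sqrt ((ρ ^ 2 + z ^ 2) * t ^ 2 / ((ρ ^ 2 + z ^ 2) * t ^ 2 - ρ ^ 2)) ^ q) := by
  constructor
  · have h := ghat_aux ρ z η rt α β φ q t 1 hρ hz hη hrt ht (Or.inl rfl)
    simpa using h
  · have h := ghat_aux ρ z η rt α β φ q t (-1) hρ hz hη hrt ht (Or.inr rfl)
    simpa [sub_eq_add_neg] using h
end

section
/- Let σ: ℂ → ℂ be bounded by M on the right half plane, and suppose a = |r'|, b = |r''| satisfy a + b < r for some r > 0. Then the double series Σₙ Σᵥ c_{nν} with |c_{nν}| ≤ 2πM aⁿ bᵛ (n+ν)!/(r^{n+ν+1} n! ν!) converges absolutely, and its rectangular truncation at order p satisfies |Σ_{n,ν≥0} c_{nν} - Σ_{n=0}^{p} Σ_{ν=0}^{p} c_{nν}| ≤ (4πM/(r - a - b)) ((a+b)/r)^{p+1}. -/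
open Finset

private lemma diag_sum_aux (K a b r : ℝ) (hr : 0 < r) (k : ℕ) :
    ∑ x ∈ Finset.HasAntidiagonal.antidiagonal k,
      K * a ^ x.1 * b ^ x.2 * (Nat.factorial (x.1 + x.2))
        / (r ^ (x.1 + x.2 + 1) * (Nat.factorial x.1) * (Nat.factorial x.2))
    = K * (a + b) ^ k / r ^ (k + 1) := by
  rw [Finset.Nat.sum_antidiagonal_eq_sum_range_succ_mk]
  have hcongr : ∀ i ∈ Finset.range (k + 1),
      K * a ^ i * b ^ (k - i) * (Nat.factorial (i + (k - i)))
        / (r ^ (i + (k - i) + 1) * (Nat.factorial i) * (Nat.factorial (k - i)))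
      = (K / r ^ (k + 1)) * (a ^ i * b ^ (k - i) * (k.choose i)) := by
    intro i hi
    have hik : i ≤ k := Nat.lt_succ_iff.mp (Finset.mem_range.mp hi)
    have h1 : i + (k - i) = k := Nat.add_sub_cancel' hik
    rw [h1]
    have h2 : (Nat.factorial k : ℝ) = (k.choose i) * Nat.factorial i * Nat.factorial (k - i) := by
      exact_mod_cast (Nat.choose_mul_factorial_mul_factorial hik).symm
    have hfi : (Nat.factorial i : ℝ) ≠ 0 := by
      exact_mod_cast (Nat.factorial_pos i).ne'
    have hfki : (Nat.factorial (k - i) : ℝ) ≠ 0 := by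
      exact_mod_cast (Nat.factorial_pos (k - i)).ne'
    have hrk : (r : ℝ) ^ (k + 1) ≠ 0 := pow_ne_zero _ hr.ne'
    field_simp [h2]
    rw [h2]; ring
  rw [Finset.sum_congr rfl hcongr, ← Finset.mul_sum, ← add_pow]
  ring

private lemma key_sum_bound (K a b r : ℝ) (hK : 0 ≤ K) (ha : 0 ≤ a) (hb : 0 ≤ b)
    (hr : 0 < r) (habr : a + b < r) (m : ℕ) (u : Finset (ℕ × ℕ))
    (hu : ∀ x ∈ u, m ≤ x.1 + x.2) :
    ∑ x ∈ u, K * a ^ x.1 * b ^ x.2 * (Nat.factorial (x.1 + x.2))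
        / (r ^ (x.1 + x.2 + 1) * (Nat.factorial x.1) * (Nat.factorial x.2))
      ≤ K * ((a + b) / r) ^ m / (r - a - b) := by
  set g : ℕ × ℕ → ℝ := fun x => K * a ^ x.1 * b ^ x.2 * (Nat.factorial (x.1 + x.2))
      / (r ^ (x.1 + x.2 + 1) * (Nat.factorial x.1) * (Nat.factorial x.2)) with hg
  have hrab : 0 < r - a - b := by linarith
  have hq0 : 0 ≤ (a + b) / r := div_nonneg (by linarith) hr.le
  have hq1 : (a + b) / r < 1 := (div_lt_one hr).mpr habr
  have hgnn : ∀ x : ℕ × ℕ, 0 ≤ g x := by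
    intro x
    apply div_nonneg
    · have := pow_nonneg ha x.1
      have := pow_nonneg hb x.2
      positivity
    · positivity
  set N := u.sup (fun x => x.1 + x.2) + 1 with hN
  have hsub : u ⊆ (Finset.Ico m N).biUnion (fun k => Finset.HasAntidiagonal.antidiagonal k) := by
    intro x hx
    exact Finset.mem_biUnion.mpr ⟨x.1 + x.2,
      Finset.mem_Ico.mpr ⟨hu x hx, Nat.lt_succ_of_le (Finset.le_sup (f := fun x => x.1 + x.2) hx)⟩,
      Finset.HasAntidiagonal.mem_antidiagonal.mpr rfl⟩
  have h1 : ∑ x ∈ u, g x ≤ ∑ x ∈ (Finset.Ico m N).biUnion (fun k => Finset.HasAntidiagonal.antidiagonal k), g x :=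
    Finset.sum_le_sum_of_subset_of_nonneg hsub (fun x _ _ => hgnn x)
  have hdisj : ∀ k₁ ∈ Finset.Ico m N, ∀ k₂ ∈ Finset.Ico m N, k₁ ≠ k₂ →
      Disjoint (Finset.HasAntidiagonal.antidiagonal k₁) (Finset.HasAntidiagonal.antidiagonal k₂) := by
    intro k₁ _ k₂ _ hne
    refine Finset.disjoint_left.mpr ?_
    intro x hx1 hx2
    rw [Finset.HasAntidiagonal.mem_antidiagonal] at hx1 hx2
    exact hne (hx1 ▸ hx2 ▸ rfl)
  rw [Finset.sum_biUnion hdisj] at h1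
  have h2 : ∀ k, ∑ x ∈ Finset.HasAntidiagonal.antidiagonal k, g x = (K / r) * ((a + b) / r) ^ k := by
    intro k
    rw [hg, diag_sum_aux K a b r hr k, div_pow, div_mul_div_comm, ← pow_succ']
  have h3 : ∑ k ∈ Finset.Ico m N, ∑ x ∈ Finset.HasAntidiagonal.antidiagonal k, g x
      = (K / r) * ((a + b) / r) ^ m * ∑ j ∈ Finset.range (N - m), ((a + b) / r) ^ j := by
    rw [Finset.sum_congr rfl (fun k _ => h2 k), Finset.sum_Ico_eq_sum_range, Finset.mul_sum]
    refine Finset.sum_congr rfl (fun j _ => ?_)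
    rw [pow_add]; ring
  have h4 : ∑ j ∈ Finset.range (N - m), ((a + b) / r) ^ j ≤ (1 - (a + b) / r)⁻¹ := by
    have hs : Summable (fun j : ℕ => ((a + b) / r) ^ j) := summable_geometric_of_lt_one hq0 hq1
    calc ∑ j ∈ Finset.range (N - m), ((a + b) / r) ^ j
        ≤ ∑' j : ℕ, ((a + b) / r) ^ j :=
          Summable.sum_le_tsum _ (fun j _ => pow_nonneg hq0 j) hs
      _ = (1 - (a + b) / r)⁻¹ := tsum_geometric_of_lt_one hq0 hq1
  have h5 : (K / r) * ((a + b) / r) ^ m * (1 - (a + b) / r)⁻¹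
      = K * ((a + b) / r) ^ m / (r - a - b) := by
    have h0 : 1 - (a + b) / r = (r - a - b) / r := by field_simp; ring
    rw [h0]
    field_simp
  calc ∑ x ∈ u, g x ≤ ∑ k ∈ Finset.Ico m N, ∑ x ∈ Finset.HasAntidiagonal.antidiagonal k, g x := h1
    _ = (K / r) * ((a + b) / r) ^ m * ∑ j ∈ Finset.range (N - m), ((a + b) / r) ^ j := h3
    _ ≤ (K / r) * ((a + b) / r) ^ m * (1 - (a + b) / r)⁻¹ := by
        apply mul_le_mul_of_nonneg_left h4
        positivity
    _ = K * ((a + b) / r) ^ m / (r - a - b) := h5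

theorem double_series_truncation_bound
    (σ : ℂ → ℂ) (M : ℝ) (hM : 0 < M)
    (hσ : ∀ s : ℂ, 0 < s.re → ‖σ s‖ ≤ M)
    (r' r'' : EuclideanSpace ℝ (Fin 3)) (a b r : ℝ)
    (hab : a = ‖r'‖) (hbb : b = ‖r''‖) (hr : 0 < r) (habr : a + b < r)
    (c : ℕ → ℕ → ℂ)
    (hc : ∀ n ν : ℕ, ‖c n ν‖
        ≤ 2 * Real.pi * M * a ^ n * b ^ ν * (Nat.factorial (n + ν))
            / (r ^ (n + ν + 1) * (Nat.factorial n) * (Nat.factorial ν)))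
    (p : ℕ) :
    Summable (fun nv : ℕ × ℕ => c nv.1 nv.2) ∧
    ‖(∑' nv : ℕ × ℕ, c nv.1 nv.2)
          - ∑ n ∈ Finset.range (p + 1), ∑ ν ∈ Finset.range (p + 1), c n ν‖
      ≤ (4 * Real.pi * M / (r - a - b)) * ((a + b) / r) ^ (p + 1) := by
  have ha : 0 ≤ a := hab ▸ norm_nonneg _
  have hb : 0 ≤ b := hbb ▸ norm_nonneg _
  have hrab : 0 < r - a - b := by linarith
  have hK : (0:ℝ) ≤ 2 * Real.pi * M := by positivity
  have hq0 : 0 ≤ (a + b) / r := div_nonneg (by linarith) hr.le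
  -- the pointwise bound
  have hcg : ∀ x : ℕ × ℕ, ‖c x.1 x.2‖ ≤
      2 * Real.pi * M * a ^ x.1 * b ^ x.2 * (Nat.factorial (x.1 + x.2))
        / (r ^ (x.1 + x.2 + 1) * (Nat.factorial x.1) * (Nat.factorial x.2)) := by
    intro x
    simpa using hc x.1 x.2
  -- summability of norms
  have hnorm_sum : Summable (fun x : ℕ × ℕ => ‖c x.1 x.2‖) := by
    apply summable_of_sum_le (c := 2 * Real.pi * M * ((a + b) / r) ^ 0 / (r - a - b))
      (fun x => norm_nonneg _)
    intro u
    calc ∑ x ∈ u, ‖c x.1 x.2‖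
        ≤ ∑ x ∈ u, 2 * Real.pi * M * a ^ x.1 * b ^ x.2 * (Nat.factorial (x.1 + x.2))
            / (r ^ (x.1 + x.2 + 1) * (Nat.factorial x.1) * (Nat.factorial x.2)) :=
          Finset.sum_le_sum (fun x _ => hcg x)
      _ ≤ 2 * Real.pi * M * ((a + b) / r) ^ 0 / (r - a - b) :=
          key_sum_bound _ a b r hK ha hb hr habr 0 u (fun x _ => Nat.zero_le _)
  have hsum : Summable (fun nv : ℕ × ℕ => c nv.1 nv.2) := hnorm_sum.of_norm
  refine ⟨hsum, ?_⟩
  set s : Finset (ℕ × ℕ) := Finset.range (p + 1) ×ˢ Finset.range (p + 1) with hs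
  have hsq : ∑ n ∈ Finset.range (p + 1), ∑ ν ∈ Finset.range (p + 1), c n ν
      = ∑ x ∈ s, c x.1 x.2 := by rw [Finset.sum_product]
  have hsplit := Summable.sum_add_tsum_compl (s := s) hsum
  have hdiff : (∑' nv : ℕ × ℕ, c nv.1 nv.2)
      - ∑ n ∈ Finset.range (p + 1), ∑ ν ∈ Finset.range (p + 1), c n ν
      = ∑' x : ((↑s : Set (ℕ × ℕ))ᶜ : Set (ℕ × ℕ)), c (x : ℕ × ℕ).1 (x : ℕ × ℕ).2 := by
    rw [hsq, ← hsplit]; ring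
  rw [hdiff]
  have hcompl : ∀ x : ℕ × ℕ, x ∈ (↑s : Set (ℕ × ℕ))ᶜ → p + 1 ≤ x.1 + x.2 := by
    intro x hx
    simp only [hs, Set.mem_compl_iff, Finset.coe_product, Set.mem_prod, Finset.mem_coe,
      Finset.mem_range, not_and_or, not_lt] at hx
    omega
  have hsub_norm : Summable (fun x : ((↑s : Set (ℕ × ℕ))ᶜ : Set (ℕ × ℕ)) =>
      ‖c (x : ℕ × ℕ).1 (x : ℕ × ℕ).2‖) := hnorm_sum.subtype _
  calc ‖∑' x : ((↑s : Set (ℕ × ℕ))ᶜ : Set (ℕ × ℕ)), c (x : ℕ × ℕ).1 (x : ℕ × ℕ).2‖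
      ≤ ∑' x : ((↑s : Set (ℕ × ℕ))ᶜ : Set (ℕ × ℕ)), ‖c (x : ℕ × ℕ).1 (x : ℕ × ℕ).2‖ := by
        simpa using norm_tsum_le_tsum_norm hsub_norm
    _ ≤ 2 * Real.pi * M * ((a + b) / r) ^ (p + 1) / (r - a - b) := by
        apply Summable.tsum_le_of_sum_le hsub_norm
        intro u
        have himg : ∑ x ∈ u, ‖c (x : ℕ × ℕ).1 (x : ℕ × ℕ).2‖
            = ∑ x ∈ u.image Subtype.val, ‖c x.1 x.2‖ :=
          (Finset.sum_image (g := Subtype.val) (f := fun x : ℕ × ℕ => ‖c x.1 x.2‖)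
            (by intro x _ y _ h; exact Subtype.ext h)).symm
        rw [himg]
        calc ∑ x ∈ u.image Subtype.val, ‖c x.1 x.2‖
            ≤ ∑ x ∈ u.image Subtype.val,
              2 * Real.pi * M * a ^ x.1 * b ^ x.2 * (Nat.factorial (x.1 + x.2))
                / (r ^ (x.1 + x.2 + 1) * (Nat.factorial x.1) * (Nat.factorial x.2)) :=
              Finset.sum_le_sum (fun x _ => hcg x)
          _ ≤ 2 * Real.pi * M * ((a + b) / r) ^ (p + 1) / (r - a - b) := by
              apply key_sum_bound _ a b r hK ha hb hr habr (p + 1)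
              intro x hx
              obtain ⟨y, _, rfl⟩ := Finset.mem_image.mp hx
              exact hcompl _ y.2
    _ ≤ (4 * Real.pi * M / (r - a - b)) * ((a + b) / r) ^ (p + 1) := by
        have hqp : 0 ≤ ((a + b) / r) ^ (p + 1) := pow_nonneg hq0 _
        have heq : (4 * Real.pi * M / (r - a - b)) * ((a + b) / r) ^ (p + 1)
            = 4 * Real.pi * M * ((a + b) / r) ^ (p + 1) / (r - a - b) := by ring
        rw [heq, div_le_div_iff_of_pos_right hrab]
        nlinarith [mul_nonneg (mul_nonneg Real.pi_pos.le hM.le) hqp]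
end
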